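/- Let (Ω,d) and (Ω',d') be A-uniform metric spaces and let f: Ω → Ω' be a continuous map that is ∂-Lipschitz with data (L,λ). Then the induced map f: (Ω,k) → (Ω',k') between the quasihyperbolizations is H-Lipschitz with H = 4A²L. -/

import Mathlib

open Metric Set Filter Topology
open scoped ENNReal Classical

noncomputable section

namespace Paper

variable {X Y : Type*}

/-- The distance function of a metric space. -/
def distFun (X : Type*) [MetricSpace X] : X → X → ℝ := fun p q => dist p q

/-- `e` is a genuine metric distance function. -/
def IsMetricDist (e : X → X → ℝ) : Prop :=
  (∀ x, e x x = 0) ∧ (∀ x y, x ≠ y → 0 < e x y) ∧ (∀ x y, e x y = e y x) ∧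
    ∀ x y z, e x z ≤ e x y + e y z

/-- Cauchy sequence with respect to the distance function `e`. -/
def CauchyWrt (e : X → X → ℝ) (u : ℕ → X) : Prop :=
  ∀ δ : ℝ, 0 < δ → ∃ N : ℕ, ∀ m, N ≤ m → ∀ n, N ≤ n → e (u m) (u n) < δ

/-- The sequence converges, w.r.t. `e`, to a point of the space. -/
def ConvWrt (e : X → X → ℝ) (u : ℕ → X) : Prop :=
  ∃ y : X, Tendsto (fun n => e (u n) y) atTop (𝓝 0)

/-- The space is incomplete with respect to `e`:
some Cauchy sequence does not converge in the space. -/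
def IncompleteWrt (e : X → X → ℝ) : Prop :=
  ∃ u : ℕ → X, CauchyWrt e u ∧ ¬ ConvWrt e u

/-- Distance from `x` to the metric boundary (the completion minus the space),
measured w.r.t. `e`: the infimum of the limits `lim_n e x (u n)` over all Cauchy
sequences `u` that have no limit in the space. -/
def bdryDistWrt (e : X → X → ℝ) (x : X) : ℝ :=
  sInf { r : ℝ | ∃ u : ℕ → X, CauchyWrt e u ∧ ¬ ConvWrt e u ∧
    Tendsto (fun n => e x (u n)) atTop (𝓝 r) }

/-- Sequential compactness of a set w.r.t. `e`. -/
def SeqCompactWrt (e : X → X → ℝ) (s : Set X) : Prop :=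
  ∀ u : ℕ → X, (∀ n, u n ∈ s) → ∃ y ∈ s, ∃ φ : ℕ → ℕ, StrictMono φ ∧
    Tendsto (fun n => e (u (φ n)) y) atTop (𝓝 0)

/-- Local compactness w.r.t. `e`: every point has arbitrarily small compact closed balls. -/
def LocallyCompactWrt (e : X → X → ℝ) : Prop :=
  ∀ x : X, ∀ r : ℝ, 0 < r → ∃ r' : ℝ, 0 < r' ∧ r' ≤ r ∧ SeqCompactWrt e { y | e x y ≤ r' }

/-- Continuity of a curve on a set of parameters, w.r.t. `e`. -/
def ContinuousOnWrt (e : X → X → ℝ) (γ : ℝ → X) (I : Set ℝ) : Prop :=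
  ∀ t ∈ I, ∀ δ : ℝ, 0 < δ → ∃ η : ℝ, 0 < η ∧ ∀ s ∈ I, |s - t| < η → e (γ s) (γ t) < δ

/-- The length (total variation) of the curve `γ` on the parameter set `I`, w.r.t. `e`. -/
def varOn (e : X → X → ℝ) (γ : ℝ → X) (I : Set ℝ) : ℝ≥0∞ :=
  ⨆ p : ℕ × { u : ℕ → ℝ // Monotone u ∧ ∀ i, u i ∈ I },
    ∑ i ∈ Finset.range p.1, ENNReal.ofReal (e (γ (p.2.1 (i + 1))) (γ (p.2.1 i)))

/-- `X` with distance `e` is an `A`-uniform metric space: it is a locally compact,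
incomplete metric space any two of whose points are joined by an `A`-uniform curve. -/
def IsUniformSpcWrt (e : X → X → ℝ) (A : ℝ) : Prop :=
  IsMetricDist e ∧ LocallyCompactWrt e ∧ IncompleteWrt e ∧
  ∀ x y : X, ∃ (a b : ℝ) (γ : ℝ → X), a ≤ b ∧ ContinuousOnWrt e γ (Icc a b) ∧
    γ a = x ∧ γ b = y ∧
    varOn e γ (Icc a b) ≤ ENNReal.ofReal (A * e x y) ∧
    ∀ t ∈ Icc a b, min (varOn e γ (Icc a t)) (varOn e γ (Icc t b)) ≤
      ENNReal.ofReal (A * bdryDistWrt e (γ t))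

/-- `f` is `∂`-Lipschitz with data `(L, lam)`. -/
def PartialLipschitzWrt (e : X → X → ℝ) (e' : Y → Y → ℝ) (L lam : ℝ) (f : X → Y) : Prop :=
  ∀ x y z : X, e y x < lam * bdryDistWrt e x → e z x < lam * bdryDistWrt e x →
    e' (f y) (f z) / bdryDistWrt e' (f x) ≤ L * (e y z / bdryDistWrt e x)

/-- `f` (with inverse `g`) is `∂`-biLipschitz with data `(L, lam)`. -/
def PartialBiLipschitzWrt (e : X → X → ℝ) (e' : Y → Y → ℝ) (L lam : ℝ)
    (f : X → Y) (g : Y → X) : Prop :=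
  1 ≤ L ∧ Function.LeftInverse g f ∧ Function.RightInverse g f ∧
    PartialLipschitzWrt e e' L lam f ∧ PartialLipschitzWrt e' e L lam g

/-- Cross-ratio of a quadruple of points, w.r.t. `e`. -/
def crossRatioWrt (e : X → X → ℝ) (x y z w : X) : ℝ := e x z * e y w / (e x y * e z w)

/-- `f` is `η`-quasimöbius. -/
def QuasiMobiusWrt (e : X → X → ℝ) (e' : Y → Y → ℝ) (η : ℝ → ℝ) (f : X → Y) : Prop :=
  ∀ x y z w : X, x ≠ y → x ≠ z → x ≠ w → y ≠ z → y ≠ w → z ≠ w →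
    crossRatioWrt e' (f x) (f y) (f z) (f w) ≤ η (crossRatioWrt e x y z w)

/-- `f` is `η`-quasisymmetric. -/
def QuasiSymmetricWrt (e : X → X → ℝ) (e' : Y → Y → ℝ) (η : ℝ → ℝ) (f : X → Y) : Prop :=
  ∀ x y z : X, ∀ t : ℝ, 0 ≤ t → e x y ≤ t * e x z → e' (f x) (f y) ≤ η t * e' (f x) (f z)

/-- `η` is (the restriction to `[0,∞)` of) a self-homeomorphism of `[0,∞)`:
continuous, strictly increasing, fixing `0`, and tending to `∞`. -/
def IsControlFun (η : ℝ → ℝ) : Prop :=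
  ContinuousOn η (Ici 0) ∧ StrictMonoOn η (Ici 0) ∧ η 0 = 0 ∧ Tendsto η atTop atTop

/-- The conformal deformation distance with conformal factor `ρ`: the infimum of
`∫ ρ ∘ γ` over all `1`-Lipschitz (w.r.t. `e`) curves joining `x` to `y`
(equivalently, the infimum of `∫_γ ρ ds` over all rectifiable curves joining `x` to `y`). -/
def confDistWrt (e : X → X → ℝ) (ρ : X → ℝ) (x y : X) : ℝ :=
  sInf { l : ℝ | ∃ (T : ℝ) (γ : ℝ → X), 0 ≤ T ∧
    (∀ s ∈ Icc 0 T, ∀ t ∈ Icc 0 T, e (γ s) (γ t) ≤ |s - t|) ∧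
    γ 0 = x ∧ γ T = y ∧ l = ∫ t in (0:ℝ)..T, ρ (γ t) }

/-- The quasihyperbolic metric of the space with distance `e`. -/
def quasiHypWrt (e : X → X → ℝ) : X → X → ℝ :=
  confDistWrt e fun z => (bdryDistWrt e z)⁻¹

/-- `γ` is a geodesic segment from `x` to `y`, parametrized by arclength on `[0, e x y]`. -/
def IsGeodesicSegWrt (e : X → X → ℝ) (γ : ℝ → X) (x y : X) : Prop :=
  γ 0 = x ∧ γ (e x y) = y ∧
    ∀ s ∈ Icc 0 (e x y), ∀ t ∈ Icc 0 (e x y), e (γ s) (γ t) = |s - t|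

/-- Any two points are joined by a geodesic. -/
def GeodesicSpaceWrt (e : X → X → ℝ) : Prop := ∀ x y : X, ∃ γ : ℝ → X, IsGeodesicSegWrt e γ x y

/-- The image of a geodesic segment. -/
def segImageWrt (e : X → X → ℝ) (γ : ℝ → X) (x y : X) : Set X := γ '' Icc 0 (e x y)

/-- `δ`-hyperbolicity: every geodesic triangle is `δ`-thin. -/
def DeltaHyperbolicWrt (e : X → X → ℝ) (δ : ℝ) : Prop :=
  ∀ (x y z : X) (γ₁ γ₂ γ₃ : ℝ → X),
    IsGeodesicSegWrt e γ₁ x y → IsGeodesicSegWrt e γ₂ y z → IsGeodesicSegWrt e γ₃ z x →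
    (∀ p ∈ segImageWrt e γ₁ x y, ∃ q ∈ segImageWrt e γ₂ y z ∪ segImageWrt e γ₃ z x, e p q ≤ δ) ∧
    (∀ p ∈ segImageWrt e γ₂ y z, ∃ q ∈ segImageWrt e γ₁ x y ∪ segImageWrt e γ₃ z x, e p q ≤ δ) ∧
    (∀ p ∈ segImageWrt e γ₃ z x, ∃ q ∈ segImageWrt e γ₁ x y ∪ segImageWrt e γ₂ y z, e p q ≤ δ)

/-- `γ` is a geodesic ray (defined on `[0,∞)`). -/
def IsGeodesicRayWrt (e : X → X → ℝ) (γ : ℝ → X) : Prop :=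
  ∀ s ∈ Ici (0:ℝ), ∀ t ∈ Ici (0:ℝ), e (γ s) (γ t) = |s - t|

/-- `γ` is a geodesic line. -/
def IsGeodesicLineWrt (e : X → X → ℝ) (γ : ℝ → X) : Prop :=
  ∀ s t : ℝ, e (γ s) (γ t) = |s - t|

/-- Two rays are at bounded distance from each other (represent the same
point of the Gromov boundary). -/
def RayEquivWrt (e : X → X → ℝ) (γ σ : ℝ → X) : Prop :=
  ∃ c : ℝ, ∀ t ∈ Ici (0:ℝ), e (γ t) (σ t) ≤ c

/-- The infimal distance from `x` to the set `s`, w.r.t. `e`. -/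
def infDistWrt (e : X → X → ℝ) (x : X) (s : Set X) : ℝ := sInf (e x '' s)

/-- `X` is `K`-roughly starlike from the point `z`. -/
def RoughStarlikeFromPointWrt (e : X → X → ℝ) (K : ℝ) (z : X) : Prop :=
  ∀ x : X, ∃ γ : ℝ → X, IsGeodesicRayWrt e γ ∧ γ 0 = z ∧ infDistWrt e x (γ '' Ici 0) ≤ K

/-- `X` is `K`-roughly starlike from the Gromov boundary point represented by the
geodesic ray `ρ`: every point lies within distance `K` of a geodesic line starting
from that boundary point. -/
def RoughStarlikeFromRayWrt (e : X → X → ℝ) (K : ℝ) (ρ : ℝ → X) : Prop :=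
  ∀ x : X, ∃ γ : ℝ → X, IsGeodesicLineWrt e γ ∧ RayEquivWrt e (fun t => γ (-t)) ρ ∧
    infDistWrt e x (range γ) ≤ K

/-- The Busemann function of the geodesic ray `ρ`:
`b_ρ(x) = lim_{t→∞} (e (ρ t) x - t) = inf_{t ≥ 0} (e (ρ t) x - t)`. -/
def busemannWrt (e : X → X → ℝ) (ρ : ℝ → X) (x : X) : ℝ :=
  sInf ((fun t => e (ρ t) x - t) '' Ici 0)

/-- `b ∈ 𝔅̂(X)` (either a translated distance function or a translated Busemann
function), and `X` is `K`-roughly starlike from the basepoint of `b`. -/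
def BhatStarlike (e : X → X → ℝ) (K : ℝ) (b : X → ℝ) : Prop :=
  (∃ (z : X) (s : ℝ), (∀ x, b x = e x z + s) ∧ RoughStarlikeFromPointWrt e K z) ∨
  (∃ (ρ : ℝ → X) (s : ℝ), IsGeodesicRayWrt e ρ ∧ (∀ x, b x = busemannWrt e ρ x + s) ∧
    RoughStarlikeFromRayWrt e K ρ)

/-- `ρ` is a Gehring–Hayman density with constant `M`: the `ρ`-length of any geodesic
is at most `M` times the conformal distance between its endpoints. -/
def IsGHDensityWrt (e : X → X → ℝ) (M : ℝ) (ρ : X → ℝ) : Prop :=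
  ∀ (x y : X) (γ : ℝ → X), IsGeodesicSegWrt e γ x y →
    (∫ t in (0:ℝ)..(e x y), ρ (γ t)) ≤ M * confDistWrt e ρ x y

/-- The density `ρ_{ε,b}(x) = e^{-ε b(x)}`. -/
def uniformizationDensity (b : X → ℝ) (ε : ℝ) : X → ℝ := fun x => Real.exp (-ε * b x)

/-- The Gromov product of `x` and `y` based at `z`. -/
def gromovProdWrt (e : X → X → ℝ) (z x y : X) : ℝ := (e x z + e y z - e x y) / 2

/-- The sequence `u` represents the Gromov boundary point of the geodesic ray `ρ`
(with respect to the basepoint `z`). -/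
def SeqRepWrt (e : X → X → ℝ) (z : X) (ρ : ℝ → X) (u : ℕ → X) : Prop :=
  Tendsto (fun n => gromovProdWrt e z (u n) (ρ n)) atTop atTop

/-- The Gromov product, based at `z`, of the two boundary points represented by the
geodesic rays `ρ` and `σ` (valued in `[0,∞]`). -/
def bGromovProdWrt (e : X → X → ℝ) (z : X) (ρ σ : ℝ → X) : ℝ≥0∞ :=
  ⨅ (u : { u : ℕ → X // SeqRepWrt e z ρ u }) (v : { v : ℕ → X // SeqRepWrt e z σ v }),
    Filter.liminf (fun n => ENNReal.ofReal (gromovProdWrt e z (u.1 n) (v.1 n))) atTop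

/-- `S(x) = sup_{ω ∈ ∂X} inf_{ξ ∈ ∂X} (ω|ξ)_x`. -/
def Sfun (e : X → X → ℝ) (x : X) : ℝ≥0∞ :=
  ⨆ (ω : { ρ : ℝ → X // IsGeodesicRayWrt e ρ }),
    ⨅ (ξ : { ρ : ℝ → X // IsGeodesicRayWrt e ρ }), bGromovProdWrt e x ω.1 ξ.1

/-- The filter at the left end of the interval `I`. -/
def leftEndFilter (I : Set ℝ) : Filter ℝ :=
  if BddBelow I then 𝓝[I] (sInf I) else atBot ⊓ 𝓟 I

/-- The filter at the right end of the interval `I`. -/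
def rightEndFilter (I : Set ℝ) : Filter ℝ :=
  if BddAbove I then 𝓝[I] (sSup I) else atTop ⊓ 𝓟 I

/-- `γ : I → Ω` is an `A`-uniform curve: it is rectifiable with endpoints
`γ₋, γ₊` in the completion `Ω̄` satisfying `ℓ(γ) ≤ A d(γ₋,γ₊)` (or non-rectifiable with
`d(γ(s),γ(t)) → ∞` towards the endpoints of `I`), and at every time `t` the shorter of
the two subcurves has length at most `A d_Ω(γ(t))`. -/
def IsUniformCurve {Ω : Type*} [MetricSpace Ω] (A : ℝ) (γ : ℝ → Ω) (I : Set ℝ) : Prop :=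
  I.Nonempty ∧ I.OrdConnected ∧ ContinuousOn γ I ∧
  ((varOn (distFun Ω) γ I ≠ ⊤ ∧
     ∃ gm gp : UniformSpace.Completion Ω,
       Tendsto (fun t => (γ t : UniformSpace.Completion Ω)) (leftEndFilter I) (𝓝 gm) ∧
       Tendsto (fun t => (γ t : UniformSpace.Completion Ω)) (rightEndFilter I) (𝓝 gp) ∧
       varOn (distFun Ω) γ I ≤ ENNReal.ofReal (A * dist gm gp)) ∨
   (varOn (distFun Ω) γ I = ⊤ ∧
     Tendsto (fun pq : ℝ × ℝ => dist (γ pq.1) (γ pq.2))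
       (leftEndFilter I ×ˢ rightEndFilter I) atTop)) ∧
  ∀ t ∈ I, min (varOn (distFun Ω) γ (I ∩ Iic t)) (varOn (distFun Ω) γ (I ∩ Ici t)) ≤
    ENNReal.ofReal (A * bdryDistWrt (distFun Ω) (γ t))

section Aux
variable {Z : Type*} [MetricSpace Z]

private def bSet (x : Z) : Set ℝ :=
  { r : ℝ | ∃ u : ℕ → Z, CauchyWrt (distFun Z) u ∧ ¬ ConvWrt (distFun Z) u ∧
    Tendsto (fun n => distFun Z x (u n)) atTop (𝓝 r) }

private lemma bdry_eq_sInf (x : Z) : bdryDistWrt (distFun Z) x = sInf (bSet x) := rfl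

private lemma bSet_nonneg {x : Z} {r : ℝ} (hr : r ∈ bSet x) : 0 ≤ r := by
  obtain ⟨u, -, -, hu⟩ := hr
  exact ge_of_tendsto' hu fun n => dist_nonneg

private lemma bSet_bddBelow (x : Z) : BddBelow (bSet x) :=
  ⟨0, fun r hr => bSet_nonneg hr⟩

private lemma bdry_nonneg (x : Z) : 0 ≤ bdryDistWrt (distFun Z) x := by
  rw [bdry_eq_sInf]
  exact Real.sInf_nonneg fun r hr => bSet_nonneg hr

private lemma exists_lim_dist {u : ℕ → Z} (hu : CauchyWrt (distFun Z) u) (x : Z) :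
    ∃ r : ℝ, Tendsto (fun n => dist x (u n)) atTop (𝓝 r) := by
  have hc : CauchySeq (fun n => dist x (u n)) := by
    rw [Metric.cauchySeq_iff]
    intro ε hε
    obtain ⟨N, hN⟩ := hu ε hε
    refine ⟨N, fun m hm n hn => ?_⟩
    have h1 : |dist (u m) x - dist (u n) x| ≤ dist (u m) (u n) := abs_dist_sub_le _ _ _
    have h2 := hN m hm n hn
    simp only [distFun] at h2
    rw [Real.dist_eq, dist_comm x (u m), dist_comm x (u n)]
    exact lt_of_le_of_lt h1 h2
  exact cauchySeq_tendsto_of_complete hc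

private lemma bSet_nonempty (hinc : IncompleteWrt (distFun Z)) (x : Z) :
    (bSet x).Nonempty := by
  obtain ⟨u, hu, hnc⟩ := hinc
  obtain ⟨r, hr⟩ := exists_lim_dist hu x
  exact ⟨r, u, hu, hnc, hr⟩

private lemma bdry_le_add (hinc : IncompleteWrt (distFun Z)) (x y : Z) :
    bdryDistWrt (distFun Z) x ≤ bdryDistWrt (distFun Z) y + dist x y := by
  rw [bdry_eq_sInf, bdry_eq_sInf]
  have h : sInf (bSet x) - dist x y ≤ sInf (bSet y) := by
    apply le_csInf (bSet_nonempty hinc y)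
    rintro r ⟨u, hu, hnc, hr⟩
    obtain ⟨r', hr'⟩ := exists_lim_dist hu x
    have hmem : r' ∈ bSet x := ⟨u, hu, hnc, hr'⟩
    have h1 : sInf (bSet x) ≤ r' := csInf_le (bSet_bddBelow x) hmem
    have h2 : r' ≤ dist x y + r := by
      have := le_of_tendsto_of_tendsto' hr' ((tendsto_const_nhds (x := dist x y)).add hr)
        (fun n => by simpa [distFun] using dist_triangle x y (u n))
      exact this
    linarith
  linarith

private lemma bdry_pos (hloc : LocallyCompactWrt (distFun Z)) (hinc : IncompleteWrt (distFun Z))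
    (x : Z) : 0 < bdryDistWrt (distFun Z) x := by
  obtain ⟨r', hr'0, -, hcmp⟩ := hloc x 1 one_pos
  rw [bdry_eq_sInf]
  have hlb : ∀ r ∈ bSet x, r' ≤ r := by
    rintro r ⟨u, hu, hnc, hr⟩
    by_contra hlt
    push_neg at hlt
    have hev : ∀ᶠ n in atTop, distFun Z x (u n) < r' := hr.eventually_lt_const hlt
    obtain ⟨N, hN⟩ := hev.exists_forall_of_atTop
    have hmem : ∀ n, u (n + N) ∈ { y | distFun Z x y ≤ r' } :=
      fun n => le_of_lt (hN (n + N) (Nat.le_add_left _ _))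
    obtain ⟨yy, -, φ, hφ, hconv⟩ := hcmp (fun n => u (n + N)) hmem
    apply hnc
    refine ⟨yy, ?_⟩
    rw [Metric.tendsto_atTop]
    intro ε hε
    obtain ⟨N₁, hN₁⟩ := hu (ε / 2) (by linarith)
    rw [Metric.tendsto_atTop] at hconv
    obtain ⟨N₂, hN₂⟩ := hconv (ε / 2) (by linarith)
    refine ⟨N₁, fun m hm => ?_⟩
    set n₀ := max N₂ N₁ with hn₀
    have hφn₀ : N₁ ≤ φ n₀ + N := le_trans (le_trans (le_max_right _ _) (hφ.le_apply)) (Nat.le_add_right _ _)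
    have h1 : distFun Z (u m) (u (φ n₀ + N)) < ε / 2 := hN₁ m hm _ hφn₀
    have h2 : dist (distFun Z (u (φ n₀ + N)) yy) 0 < ε / 2 := hN₂ n₀ (le_max_left _ _)
    simp only [Real.dist_eq, sub_zero] at h2 ⊢
    have h2' : distFun Z (u (φ n₀ + N)) yy < ε / 2 := lt_of_abs_lt h2
    have htri : distFun Z (u m) yy ≤ distFun Z (u m) (u (φ n₀ + N)) + distFun Z (u (φ n₀ + N)) yy :=
      dist_triangle _ _ _
    have hnn : (0:ℝ) ≤ distFun Z (u m) yy := dist_nonneg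
    rw [abs_of_nonneg hnn]
    linarith
  exact lt_of_lt_of_le hr'0 (le_csInf (bSet_nonempty hinc x) hlb)

private lemma bdry_lipschitz (hinc : IncompleteWrt (distFun Z)) :
    LipschitzWith 1 (fun z : Z => bdryDistWrt (distFun Z) z) := by
  apply LipschitzWith.of_dist_le_mul
  intro a b
  simp only [NNReal.coe_one, one_mul]
  rw [Real.dist_eq, abs_sub_le_iff]
  have h1 := bdry_le_add hinc a b
  have h2 := bdry_le_add hinc b a
  rw [dist_comm b a] at h2
  constructor <;> linarith

end Aux

section Aux2
variable {Z : Type*} [MetricSpace Z]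

private lemma varOn_eq (γ : ℝ → Z) (I : Set ℝ) :
    varOn (distFun Z) γ I = eVariationOn γ I := by
  refine iSup_congr fun p => Finset.sum_congr rfl fun i _ => ?_
  rw [distFun, edist_dist]

private lemma continuousOn_of_wrt {γ : ℝ → Z} {I : Set ℝ}
    (h : ContinuousOnWrt (distFun Z) γ I) : ContinuousOn γ I := by
  rw [Metric.continuousOn_iff]
  intro b hb ε hε
  obtain ⟨η, hη, hη'⟩ := h b hb ε hε
  exact ⟨η, hη, fun a ha hab => hη' a ha (by rwa [Real.dist_eq] at hab)⟩

/-- Arclength reparametrization: a continuous curve of variation at most `C` on `[a,b]`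
can be reparametrized to a `1`-Lipschitz curve on `[0,T]` with `T ≤ C`. -/
private lemma exists_unit_speed {γ : ℝ → Z} {a b C : ℝ} (hab : a ≤ b) (hC : 0 ≤ C)
    (hcont : ContinuousOn γ (Icc a b))
    (hvar : eVariationOn γ (Icc a b) ≤ ENNReal.ofReal C) :
    ∃ (T : ℝ) (σ : ℝ → Z), 0 ≤ T ∧ T ≤ C ∧
      (∀ s ∈ Icc (0:ℝ) T, ∀ t ∈ Icc (0:ℝ) T, dist (σ s) (σ t) ≤ |s - t|) ∧
      σ 0 = γ a ∧ σ T = γ b := by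
  have hfin : ∀ s t : ℝ, a ≤ s → t ≤ b → eVariationOn γ (Icc s t) ≠ ⊤ := by
    intro s t hs ht
    refine ne_top_of_le_ne_top (by simp) (le_trans (eVariationOn.mono γ ?_) hvar)
    exact Icc_subset_Icc hs ht
  set φ : ℝ → ℝ := fun t => (eVariationOn γ (Icc a t)).toReal with hφdef
  have hφa : φ a = 0 := by
    simp only [hφdef, Icc_self]
    rw [eVariationOn.subsingleton, ENNReal.toReal_zero]
    exact subsingleton_singleton
  have hadd : ∀ s t : ℝ, a ≤ s → s ≤ t → t ≤ b →
      φ t = φ s + (eVariationOn γ (Icc s t)).toReal := by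
    intro s t has hst htb
    have h := eVariationOn.Icc_add_Icc γ (s := (univ : Set ℝ)) has hst (mem_univ s)
    simp only [univ_inter] at h
    rw [hφdef]
    simp only
    rw [← h, ENNReal.toReal_add (hfin a s le_rfl (le_trans hst htb)) (hfin s t has htb)]
  have hφnonneg : ∀ t, 0 ≤ φ t := fun t => ENNReal.toReal_nonneg
  have hmono : ∀ s t : ℝ, a ≤ s → s ≤ t → t ≤ b → φ s ≤ φ t := by
    intro s t has hst htb
    rw [hadd s t has hst htb]
    exact le_add_of_nonneg_right ENNReal.toReal_nonneg
  have hdist : ∀ s t : ℝ, a ≤ s → s ≤ t → t ≤ b → dist (γ s) (γ t) ≤ φ t - φ s := by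
    intro s t has hst htb
    have h1 : edist (γ s) (γ t) ≤ eVariationOn γ (Icc s t) :=
      eVariationOn.edist_le γ (left_mem_Icc.2 hst) (right_mem_Icc.2 hst)
    have h2 : dist (γ s) (γ t) ≤ (eVariationOn γ (Icc s t)).toReal := by
      rw [dist_edist]
      exact ENNReal.toReal_mono (hfin s t has htb) h1
    rw [hadd s t has hst htb]
    linarith
  set T : ℝ := φ b with hTdef
  have hT0 : 0 ≤ T := hφnonneg b
  have hTC : T ≤ C := by
    rw [hTdef, hφdef]
    exact ENNReal.toReal_le_of_le_ofReal hC hvar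
  set Sr : ℝ → Set ℝ := fun r => {t | t ∈ Icc a b ∧ φ t ≤ r} with hSrdef
  set ψ : ℝ → ℝ := fun r => sSup (Sr r) with hψdef
  have hSne : ∀ r, 0 ≤ r → (Sr r).Nonempty := fun r hr =>
    ⟨a, ⟨left_mem_Icc.2 hab, by rw [hφa]; exact hr⟩⟩
  have hSbdd : ∀ r, BddAbove (Sr r) := fun r => ⟨b, fun t ht => ht.1.2⟩
  have hψmem : ∀ r, 0 ≤ r → ψ r ∈ Icc a b := by
    intro r hr
    constructor
    · exact le_csSup (hSbdd r) ⟨left_mem_Icc.2 hab, by rw [hφa]; exact hr⟩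
    · exact csSup_le (hSne r hr) fun t ht => ht.1.2
  have hgt : ∀ r, 0 ≤ r → ∀ v ∈ Icc a b, ψ r < v → r < φ v := by
    intro r hr v hv hlt
    by_contra h
    push_neg at h
    exact absurd (le_csSup (hSbdd r) ⟨hv, h⟩) (not_le.2 hlt)
  have happrox : ∀ r, 0 ≤ r → ∀ η : ℝ, 0 < η →
      ∃ t, t ∈ Icc a b ∧ φ t ≤ r ∧ ψ r - η < t ∧ t ≤ ψ r := by
    intro r hr η hη
    obtain ⟨t, ht, hlt⟩ := exists_lt_of_lt_csSup (hSne r hr) (by linarith : ψ r - η < ψ r)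
    exact ⟨t, ht.1, ht.2, hlt, le_csSup (hSbdd r) ht⟩
  have hψmono : ∀ r r' : ℝ, 0 ≤ r → r ≤ r' → ψ r ≤ ψ r' :=
    fun r r' hr hrr' => csSup_le_csSup (hSbdd r') (hSne r hr)
      (fun t ht => ⟨ht.1, le_trans ht.2 hrr'⟩)
  -- the key Lipschitz estimate
  have key : ∀ r r' : ℝ, 0 ≤ r → r ≤ r' → dist (γ (ψ r)) (γ (ψ r')) ≤ r' - r := by
    intro r r' hr hrr'
    have hr' : 0 ≤ r' := le_trans hr hrr'
    rcases eq_or_lt_of_le (hψmono r r' hr hrr') with heq | hlt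
    · rw [heq, dist_self]; linarith
    · set s := ψ r
      set s' := ψ r'
      have hsmem := hψmem r hr
      have hsmem' := hψmem r' hr'
      refine le_of_forall_pos_le_add fun ε hε => ?_
      have hc1 := hcont (ψ r) hsmem
      have hc2 := hcont (ψ r') hsmem'
      rw [Metric.continuousWithinAt_iff] at hc1 hc2
      obtain ⟨δ₁, hδ₁, hδ₁'⟩ := hc1 (ε / 2) (by linarith)
      obtain ⟨δ₂, hδ₂, hδ₂'⟩ := hc2 (ε / 2) (by linarith)
      set v : ℝ := min (s + δ₁ / 2) ((s + s') / 2) with hvdef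
      have hvs : s < v := by
        apply lt_min <;> linarith
      have hvs' : v < s' := by
        apply lt_of_le_of_lt (min_le_right _ _); linarith
      have hvmem : v ∈ Icc a b := ⟨le_trans hsmem.1 (le_of_lt hvs), le_trans (le_of_lt hvs') hsmem'.2⟩
      have hφv : r < φ v := hgt r hr v hvmem hvs
      obtain ⟨w, hwmem, hwφ, hwlt, hwle⟩ := happrox r' hr' (min δ₂ (s' - v))
        (lt_min hδ₂ (by linarith))
      have hvw : v ≤ w := by
        have : s' - (s' - v) ≤ s' - min δ₂ (s' - v) := by
          have := min_le_right δ₂ (s' - v); linarith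
        linarith [hwlt]
      have h1 : dist (γ v) (γ w) ≤ φ w - φ v := hdist v w hvmem.1 hvw hwmem.2
      have h2 : dist (γ s) (γ v) < ε / 2 := by
        rw [dist_comm]
        refine hδ₁' hvmem ?_
        rw [Real.dist_eq, abs_of_pos (by linarith : (0:ℝ) < v - ψ r)]
        have hle : v ≤ s + δ₁ / 2 := min_le_left _ _
        show v - ψ r < δ₁
        linarith
      have h3 : dist (γ w) (γ s') < ε / 2 := by
        refine hδ₂' hwmem ?_
        rw [Real.dist_eq, abs_of_nonpos (by linarith : w - ψ r' ≤ 0)]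
        have hle : min δ₂ (s' - v) ≤ δ₂ := min_le_left _ _
        show -(w - ψ r') < δ₂
        linarith
      calc dist (γ s) (γ s') ≤ dist (γ s) (γ v) + dist (γ v) (γ w) + dist (γ w) (γ s') :=
            dist_triangle4 _ _ _ _
        _ ≤ ε / 2 + (φ w - φ v) + ε / 2 := by linarith
        _ ≤ r' - r + ε := by linarith [hwφ, hφv]
  refine ⟨T, fun r => γ (ψ r), hT0, hTC, ?_, ?_, ?_⟩
  · intro s hs t ht
    rcases le_total s t with h | h
    · rw [abs_of_nonpos (by linarith)]
      have := key s t hs.1 h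
      linarith
    · rw [abs_of_nonneg (by linarith), dist_comm]
      have := key t s ht.1 h
      linarith
  · -- γ (ψ 0) = γ a
    have hs₀ := hψmem 0 le_rfl
    have : ∀ ε : ℝ, 0 < ε → dist (γ (ψ 0)) (γ a) ≤ ε := by
      intro ε hε
      have hc := hcont (ψ 0) hs₀
      rw [Metric.continuousWithinAt_iff] at hc
      obtain ⟨δ, hδ, hδ'⟩ := hc ε hε
      obtain ⟨t, htmem, htφ, htlt, htle⟩ := happrox 0 le_rfl δ hδ
      have hφt : φ t = 0 := le_antisymm htφ (hφnonneg t)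
      have hta : γ t = γ a := by
        have := hdist a t le_rfl htmem.1 htmem.2
        rw [hφa, hφt] at this
        simp only [sub_zero] at this
        have : dist (γ a) (γ t) ≤ 0 := by linarith
        exact (dist_le_zero.1 this).symm
      have : dist (γ t) (γ (ψ 0)) < ε := by
        refine hδ' htmem ?_
        rw [Real.dist_eq, abs_of_nonpos (by linarith)]
        linarith
      rw [← hta, dist_comm]
      exact le_of_lt this
    have : dist (γ (ψ 0)) (γ a) ≤ 0 := le_of_forall_gt_imp_ge_of_dense fun ε hε => this ε hε
    exact dist_le_zero.1 this
  · -- ψ T = b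
    have : ψ T = b := by
      apply le_antisymm (hψmem T hT0).2
      exact le_csSup (hSbdd T) ⟨right_mem_Icc.2 hab, le_rfl⟩
    show γ (ψ T) = γ b
    rw [this]

end Aux2

section Aux3
variable {Z : Type*} [MetricSpace Z]

/-- Admissible curve certificate with integrability. -/
private def Adm (ρ : Z → ℝ) (x y : Z) (l : ℝ) : Prop :=
  ∃ (T : ℝ) (γ : ℝ → Z), 0 ≤ T ∧
    (∀ s ∈ Icc (0:ℝ) T, ∀ t ∈ Icc (0:ℝ) T, dist (γ s) (γ t) ≤ |s - t|) ∧
    γ 0 = x ∧ γ T = y ∧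
    IntervalIntegrable (fun t => ρ (γ t)) MeasureTheory.volume 0 T ∧
    l = ∫ t in (0:ℝ)..T, ρ (γ t)

private lemma confDist_le_of_adm {ρ : Z → ℝ} (hρ : ∀ z, 0 ≤ ρ z) {x y : Z} {l : ℝ}
    (h : Adm ρ x y l) : confDistWrt (distFun Z) ρ x y ≤ l := by
  obtain ⟨T, γ, hT0, hlip, h0, hT, -, hl⟩ := h
  apply csInf_le
  · refine ⟨0, fun l' hl' => ?_⟩
    obtain ⟨T', γ', hT'0, -, -, -, hl'⟩ := hl'
    rw [hl']
    exact intervalIntegral.integral_nonneg hT'0 fun u _ => hρ _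
  · exact ⟨T, γ, hT0, hlip, h0, hT, hl⟩

private lemma adm_refl (ρ : Z → ℝ) (x : Z) : Adm ρ x x 0 := by
  refine ⟨0, fun _ => x, le_rfl, ?_, rfl, rfl, ?_, ?_⟩
  · intro s _ t _; simp [dist_self, abs_nonneg]
  · exact intervalIntegrable_const
  · simp

private lemma Adm.trans {ρ : Z → ℝ} {x y z : Z} {l₁ l₂ : ℝ}
    (h₁ : Adm ρ x y l₁) (h₂ : Adm ρ y z l₂) : Adm ρ x z (l₁ + l₂) := by
  obtain ⟨T₁, γ₁, hT₁, hlip₁, h10, h1T, hint₁, hl₁⟩ := h₁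
  obtain ⟨T₂, γ₂, hT₂, hlip₂, h20, h2T, hint₂, hl₂⟩ := h₂
  set Γ : ℝ → Z := fun t => if t ≤ T₁ then γ₁ t else γ₂ (t - T₁) with hΓdef
  have hΓ1 : ∀ t, t ≤ T₁ → Γ t = γ₁ t := fun t ht => if_pos ht
  have hΓ2 : ∀ t, T₁ ≤ t → Γ t = γ₂ (t - T₁) := by
    intro t ht
    rcases eq_or_lt_of_le ht with h | h
    · rw [← h]; simp only [hΓdef, if_pos le_rfl, sub_self, h20, h1T]
    · exact if_neg (not_le.2 h)
  have hlipmix : ∀ s t, s ∈ Icc (0:ℝ) (T₁ + T₂) → t ∈ Icc (0:ℝ) (T₁ + T₂) → s ≤ t →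
      dist (Γ s) (Γ t) ≤ t - s := by
    intro s t hs ht hst
    rcases le_or_gt t T₁ with h | h
    · rw [hΓ1 s (le_trans hst h), hΓ1 t h]
      have := hlip₁ s ⟨hs.1, le_trans hst h⟩ t ⟨ht.1, h⟩
      rwa [abs_of_nonpos (by linarith), neg_sub] at this
    · rcases le_or_gt s T₁ with h' | h'
      · rw [hΓ1 s h', hΓ2 t (le_of_lt h)]
        have e1 := hlip₁ s ⟨hs.1, h'⟩ T₁ ⟨hT₁, le_rfl⟩
        rw [abs_of_nonpos (by linarith), neg_sub] at e1
        have e2 := hlip₂ 0 ⟨le_rfl, hT₂⟩ (t - T₁) ⟨by linarith, by linarith [ht.2]⟩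
        rw [abs_of_nonpos (by linarith), neg_sub, sub_zero] at e2
        rw [h1T, ← h20] at e1
        calc dist (γ₁ s) (γ₂ (t - T₁)) ≤ dist (γ₁ s) (γ₂ 0) + dist (γ₂ 0) (γ₂ (t - T₁)) :=
              dist_triangle _ _ _
          _ ≤ (T₁ - s) + (t - T₁ - 0) := by
              refine add_le_add e1 ?_
              simpa using e2
          _ = t - s := by ring
      · rw [hΓ2 s (le_of_lt h'), hΓ2 t (le_of_lt (lt_of_lt_of_le h' hst))]
        have := hlip₂ (s - T₁) ⟨by linarith, by linarith [hs.2]⟩ (t - T₁)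
          ⟨by linarith, by linarith [ht.2]⟩
        rw [abs_of_nonpos (by linarith)] at this
        linarith [this]
  have hE1 : EqOn (fun t => ρ (Γ t)) (fun t => ρ (γ₁ t)) (Icc 0 T₁) := by
    intro t ht; simp only; rw [hΓ1 t ht.2]
  have hE2 : EqOn (fun t => ρ (Γ t)) (fun t => ρ (γ₂ (t - T₁))) (Icc T₁ (T₁ + T₂)) := by
    intro t ht; simp only; rw [hΓ2 t ht.1]
  have hintΓ1 : IntervalIntegrable (fun t => ρ (Γ t)) MeasureTheory.volume 0 T₁ := by
    rw [intervalIntegrable_iff_integrableOn_Icc_of_le hT₁]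
    rw [intervalIntegrable_iff_integrableOn_Icc_of_le hT₁] at hint₁
    exact hint₁.congr_fun hE1.symm measurableSet_Icc
  have hint₂' : IntervalIntegrable (fun t => ρ (γ₂ (t - T₁))) MeasureTheory.volume T₁ (T₁ + T₂) := by
    have := hint₂.comp_sub_right T₁
    simpa [add_comm] using this
  have hintΓ2 : IntervalIntegrable (fun t => ρ (Γ t)) MeasureTheory.volume T₁ (T₁ + T₂) := by
    rw [intervalIntegrable_iff_integrableOn_Icc_of_le (by linarith)]
    rw [intervalIntegrable_iff_integrableOn_Icc_of_le (by linarith)] at hint₂'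
    exact hint₂'.congr_fun hE2.symm measurableSet_Icc
  refine ⟨T₁ + T₂, Γ, by linarith, ?_, ?_, ?_, ?_, ?_⟩
  · intro s hs t ht
    rcases le_total s t with h | h
    · rw [abs_of_nonpos (by linarith)]
      have := hlipmix s t hs ht h; linarith
    · rw [abs_of_nonneg (by linarith), dist_comm]
      have := hlipmix t s ht hs h; linarith
  · rw [hΓ1 0 hT₁, h10]
  · rw [hΓ2 (T₁ + T₂) (by linarith)]; simpa using h2T
  · exact hintΓ1.trans hintΓ2
  · rw [← intervalIntegral.integral_add_adjacent_intervals hintΓ1 hintΓ2]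
    have e1 : ∫ t in (0:ℝ)..T₁, ρ (Γ t) = ∫ t in (0:ℝ)..T₁, ρ (γ₁ t) :=
      intervalIntegral.integral_congr (by rwa [uIcc_of_le hT₁])
    have e2 : ∫ t in T₁..(T₁ + T₂), ρ (Γ t) = ∫ t in T₁..(T₁ + T₂), ρ (γ₂ (t - T₁)) :=
      intervalIntegral.integral_congr (by rwa [uIcc_of_le (by linarith : T₁ ≤ T₁ + T₂)])
    have e3 : ∫ t in T₁..(T₁ + T₂), ρ (γ₂ (t - T₁)) = ∫ t in (0:ℝ)..T₂, ρ (γ₂ t) := by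
      rw [intervalIntegral.integral_comp_sub_right (fun t => ρ (γ₂ t)) T₁]
      norm_num
    rw [e1, e2, e3, hl₁, hl₂]

private lemma Adm.chain {ρ : Z → ℝ} (g : ℕ → Z) (l : ℕ → ℝ) :
    ∀ n : ℕ, (∀ i, i < n → Adm ρ (g i) (g (i + 1)) (l i)) →
      Adm ρ (g 0) (g n) (∑ i ∈ Finset.range n, l i) := by
  intro n
  induction n with
  | zero => intro _; simpa using adm_refl ρ (g 0)
  | succ n ih =>
    intro h
    rw [Finset.sum_range_succ]
    exact (ih fun i hi => h i (Nat.lt_succ_of_lt hi)).trans (h n (Nat.lt_succ_self n))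

end Aux3


section Piece
variable {Z : Type*} [MetricSpace Z]

private lemma uniform_piece {A : ℝ} (hA : 1 ≤ A)
    (hU : IsUniformSpcWrt (distFun Z) A) (u v : Z)
    (h2A : 2 * A * dist u v ≤ bdryDistWrt (distFun Z) u) :
    ∃ l, Adm (fun z => (bdryDistWrt (distFun Z) z)⁻¹) u v l ∧
      l ≤ 2 * A * dist u v / bdryDistWrt (distFun Z) u := by
  obtain ⟨hmet, hloc, hinc, hjoin⟩ := hU
  have hbpos : ∀ z : Z, 0 < bdryDistWrt (distFun Z) z := bdry_pos hloc hinc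
  obtain ⟨a, b, γ, hab, hcw, hga, hgb, hvar, -⟩ := hjoin u v
  have hcont := continuousOn_of_wrt hcw
  rw [varOn_eq] at hvar
  have hduv : (0:ℝ) ≤ dist u v := dist_nonneg
  have hC : 0 ≤ A * dist u v := mul_nonneg (by linarith) hduv
  have hvar' : eVariationOn γ (Icc a b) ≤ ENNReal.ofReal (A * dist u v) := hvar
  obtain ⟨T, σ, hT0, hTC, hlip, hσ0, hσT⟩ := exists_unit_speed hab hC hcont hvar'
  set B := bdryDistWrt (distFun Z) u with hB
  have hBpos : 0 < B := hbpos u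
  have hlow : ∀ t ∈ Icc (0:ℝ) T, B / 2 ≤ bdryDistWrt (distFun Z) (σ t) := by
    intro t ht
    have h1 : dist (σ 0) (σ t) ≤ t := by
      have := hlip 0 ⟨le_rfl, hT0⟩ t ht
      rwa [abs_of_nonpos (by linarith [ht.1]), neg_sub, sub_zero] at this
    have h2 : dist u (σ t) ≤ t := by
      rw [← hga, ← hσ0]; exact h1
    have h3 := bdry_le_add hinc u (σ t)
    have h4 : t ≤ B / 2 := by
      have := ht.2
      nlinarith [hTC, h2A]
    nlinarith [h3, h2, h4]
  have hσcont : ContinuousOn σ (Icc 0 T) := by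
    rw [Metric.continuousOn_iff]
    intro s hs ε hε
    exact ⟨ε, hε, fun t ht hts => (hlip t ht s hs).trans_lt (by rwa [Real.dist_eq] at hts)⟩
  have hρcont : ContinuousOn (fun t => (bdryDistWrt (distFun Z) (σ t))⁻¹) (Icc 0 T) := by
    apply ContinuousOn.inv₀
    · exact (bdry_lipschitz hinc).continuous.comp_continuousOn hσcont
    · exact fun t ht => ne_of_gt (hbpos _)
  have hint : IntervalIntegrable (fun t => (bdryDistWrt (distFun Z) (σ t))⁻¹)
      MeasureTheory.volume 0 T :=
    ContinuousOn.intervalIntegrable (by rwa [uIcc_of_le hT0])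
  refine ⟨∫ t in (0:ℝ)..T, (bdryDistWrt (distFun Z) (σ t))⁻¹,
    ⟨T, σ, hT0, hlip, hσ0.trans hga, hσT.trans hgb, hint, rfl⟩, ?_⟩
  have hbound : ∀ t ∈ Icc (0:ℝ) T,
      (bdryDistWrt (distFun Z) (σ t))⁻¹ ≤ 2 / B := by
    intro t ht
    have h1 : 0 < B / 2 := by linarith
    have h2 := inv_anti₀ h1 (hlow t ht)
    rwa [inv_div] at h2
  calc (∫ t in (0:ℝ)..T, (bdryDistWrt (distFun Z) (σ t))⁻¹)
      ≤ ∫ _ in (0:ℝ)..T, 2 / B :=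
        intervalIntegral.integral_mono_on hT0 hint intervalIntegrable_const hbound
    _ = T * (2 / B) := by rw [intervalIntegral.integral_const, smul_eq_mul, sub_zero]
    _ ≤ (A * dist u v) * (2 / B) := by
        apply mul_le_mul_of_nonneg_right hTC
        positivity
    _ = 2 * A * dist u v / B := by ring

end Piece

set_option maxHeartbeats 2000000 in
/-- If `f` is a continuous `∂`-Lipschitz map with data `(L, λ)` between
two `A`-uniform metric spaces, then the induced map between the quasihyperbolizations is
`H`-Lipschitz with `H = 4A²L`. -/
theorem statement1 {Ω Ω' : Type*} [MetricSpace Ω] [MetricSpace Ω']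
    (A L lam : ℝ) (hA : 1 ≤ A) (hL : 0 ≤ L) (hlam0 : 0 < lam) (hlam1 : lam < 1)
    (hΩ : IsUniformSpcWrt (distFun Ω) A) (hΩ' : IsUniformSpcWrt (distFun Ω') A)
    (f : Ω → Ω') (hf : Continuous f)
    (hpl : PartialLipschitzWrt (distFun Ω) (distFun Ω') L lam f) :
    ∀ x y : Ω, quasiHypWrt (distFun Ω') (f x) (f y) ≤
      (4 * A ^ 2 * L) * quasiHypWrt (distFun Ω) x y := by
  intro x y
  obtain ⟨hmet, hloc, hinc, hjoin⟩ := hΩ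
  have hloc' : LocallyCompactWrt (distFun Ω') := hΩ'.2.1
  have hinc' : IncompleteWrt (distFun Ω') := hΩ'.2.2.1
  have hA0 : (0:ℝ) < A := by linarith
  have hbpos : ∀ z : Ω, 0 < bdryDistWrt (distFun Ω) z := bdry_pos hloc hinc
  have hbpos' : ∀ z : Ω', 0 < bdryDistWrt (distFun Ω') z := bdry_pos hloc' hinc'
  have hρ'nonneg : ∀ z : Ω', 0 ≤ (bdryDistWrt (distFun Ω') z)⁻¹ :=
    fun z => inv_nonneg.2 (le_of_lt (hbpos' z))
  set c : ℝ := 4 * A ^ 2 * L with hc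
  have hc0 : 0 ≤ c := by positivity
  set S := { l : ℝ | ∃ (T : ℝ) (γ : ℝ → Ω), 0 ≤ T ∧
    (∀ s ∈ Icc (0:ℝ) T, ∀ t ∈ Icc (0:ℝ) T, distFun Ω (γ s) (γ t) ≤ |s - t|) ∧
    γ 0 = x ∧ γ T = y ∧
    l = ∫ t in (0:ℝ)..T, (bdryDistWrt (distFun Ω) (γ t))⁻¹ } with hSdef
  have hqh : quasiHypWrt (distFun Ω) x y = sInf S := rfl
  -- the set `S` is nonempty, by reparametrizing a uniform curve from `x` to `y`
  have hSne : S.Nonempty := by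
    obtain ⟨a, b, γ, hab, hcw, hga, hgb, hvar, -⟩ := hjoin x y
    have hcont := continuousOn_of_wrt hcw
    rw [varOn_eq] at hvar
    have hC : 0 ≤ A * dist x y := mul_nonneg (by linarith) dist_nonneg
    have hvar' : eVariationOn γ (Icc a b) ≤ ENNReal.ofReal (A * dist x y) := hvar
    obtain ⟨T, σ, hT0, -, hlip, hσ0, hσT⟩ := exists_unit_speed hab hC hcont hvar'
    exact ⟨_, T, σ, hT0, hlip, hσ0.trans hga, hσT.trans hgb, rfl⟩
  -- main estimate: for every admissible curve in `Ω`, the image chain gives the bound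
  have key : ∀ l ∈ S, quasiHypWrt (distFun Ω') (f x) (f y) ≤ c * l := by
    rintro l ⟨T, γ, hT0, hlip', hγ0, hγT, hldef⟩
    have hlip : ∀ s ∈ Icc (0:ℝ) T, ∀ t ∈ Icc (0:ℝ) T, dist (γ s) (γ t) ≤ |s - t| := hlip'
    have hγcont : ContinuousOn γ (Icc 0 T) := by
      rw [Metric.continuousOn_iff]
      intro s hs ε hε
      exact ⟨ε, hε, fun t ht hts => (hlip t ht s hs).trans_lt (by rwa [Real.dist_eq] at hts)⟩
    have hbγcont : ContinuousOn (fun s => bdryDistWrt (distFun Ω) (γ s)) (Icc 0 T) :=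
      (bdry_lipschitz hinc).continuous.comp_continuousOn hγcont
    obtain ⟨s₀, hs₀mem, hs₀min⟩ := isCompact_Icc.exists_isMinOn (nonempty_Icc.2 hT0) hbγcont
    set m := bdryDistWrt (distFun Ω) (γ s₀) with hmdef
    have hm0 : 0 < m := hbpos _
    set M : ℝ := max L 1 with hM
    have hM1 : (1:ℝ) ≤ M := le_max_right _ _
    have hLM : L ≤ M := le_max_left _ _
    have hAM : (0:ℝ) < 2 * A * M := by nlinarith
    set δ₀ : ℝ := min (lam * m / 2) (m / (2 * A * M)) with hδ₀def
    have hδ₀pos : 0 < δ₀ := lt_min (by nlinarith) (div_pos hm0 hAM)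
    set n : ℕ := max 1 ⌈T / δ₀⌉₊ with hn
    have hn1 : 1 ≤ n := le_max_left _ _
    have hnpos : (0:ℝ) < n := by exact_mod_cast lt_of_lt_of_le one_pos hn1
    set δ : ℝ := T / n with hδdef
    have hδ0 : 0 ≤ δ := div_nonneg hT0 (le_of_lt hnpos)
    have hδδ₀ : δ ≤ δ₀ := by
      rw [hδdef, div_le_iff₀ hnpos]
      have h1 : T / δ₀ ≤ (⌈T / δ₀⌉₊ : ℝ) := Nat.le_ceil _
      have h2 : ((⌈T / δ₀⌉₊ : ℕ) : ℝ) ≤ (n : ℝ) := by exact_mod_cast le_max_right 1 ⌈T / δ₀⌉₊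
      calc T = (T / δ₀) * δ₀ := by field_simp
        _ ≤ (n : ℝ) * δ₀ := by nlinarith
        _ = δ₀ * n := by ring
    have hnδ : (n : ℝ) * δ = T := by rw [hδdef]; field_simp
    have hgrid : ∀ i : ℕ, i ≤ n → (i : ℝ) * δ ∈ Icc (0:ℝ) T := by
      intro i hi
      refine ⟨by positivity, ?_⟩
      rw [← hnδ]
      exact mul_le_mul_of_nonneg_right (by exact_mod_cast hi) hδ0
    have hmle : ∀ s ∈ Icc (0:ℝ) T, m ≤ bdryDistWrt (distFun Ω) (γ s) := fun s hs => hs₀min hs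
    have hδm : δ ≤ m / (2 * A * M) := le_trans hδδ₀ (min_le_right _ _)
    have hδlam : δ < lam * m := lt_of_le_of_lt (le_trans hδδ₀ (min_le_left _ _)) (by nlinarith)
    have hδlem : δ ≤ m := by
      have : m / (2 * A * M) ≤ m := by
        rw [div_le_iff₀ hAM]
        nlinarith [hm0, mul_le_mul hA hM1 zero_le_one (le_of_lt hA0)]
      linarith [hδm]
    set g : ℕ → Ω' := fun i => f (γ ((i : ℝ) * δ)) with hgdef
    -- the per-step construction
    have step : ∀ i : ℕ, ∃ li : ℝ, i < n →
        Adm (fun z => (bdryDistWrt (distFun Ω') z)⁻¹) (g i) (g (i + 1)) li ∧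
          li ≤ 4 * A * L *
            ∫ s in ((i:ℝ) * δ)..(((i+1:ℕ) : ℝ) * δ), (bdryDistWrt (distFun Ω) (γ s))⁻¹ := by
      intro i
      by_cases hi : i < n
      swap
      · exact ⟨0, fun h => absurd h hi⟩
      have hcast : ((i + 1 : ℕ) : ℝ) = (i : ℝ) + 1 := by push_cast; ring
      set p := γ ((i : ℝ) * δ) with hpdef
      set q := γ (((i + 1 : ℕ) : ℝ) * δ) with hqdef
      have hip : (i : ℝ) * δ ∈ Icc (0:ℝ) T := hgrid i (le_of_lt hi)
      have hiq : ((i + 1 : ℕ) : ℝ) * δ ∈ Icc (0:ℝ) T := hgrid (i + 1) hi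
      have hdpq : dist p q ≤ δ := by
        have h := hlip _ hip _ hiq
        calc dist p q ≤ |(i : ℝ) * δ - ((i + 1 : ℕ) : ℝ) * δ| := h
          _ = δ := by rw [hcast, abs_of_nonpos (by nlinarith)]; ring
      have hbp : m ≤ bdryDistWrt (distFun Ω) p := hmle _ hip
      have hbppos : 0 < bdryDistWrt (distFun Ω) p := hbpos p
      have hbfp : 0 < bdryDistWrt (distFun Ω') (f p) := hbpos' (f p)
      have hpl1 : distFun Ω p p < lam * bdryDistWrt (distFun Ω) p := by
        show dist p p < _
        rw [dist_self]; nlinarith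
      have hpl2 : distFun Ω q p < lam * bdryDistWrt (distFun Ω) p := by
        show dist q p < _
        rw [dist_comm]
        calc dist p q ≤ δ := hdpq
          _ < lam * m := hδlam
          _ ≤ lam * bdryDistWrt (distFun Ω) p := by nlinarith
      have hdistq : dist (f p) (f q) / bdryDistWrt (distFun Ω') (f p) ≤
          L * (dist p q / bdryDistWrt (distFun Ω) p) := hpl p p q hpl1 hpl2
      have hdd : dist p q / bdryDistWrt (distFun Ω) p ≤ δ / m :=
        div_le_div₀ hδ0 hdpq hm0 hbp
      have hδoverm : δ / m ≤ 1 / (2 * A * M) := by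
        rw [div_le_div_iff₀ hm0 hAM]
        have h := mul_le_mul_of_nonneg_right hδm (le_of_lt hAM)
        rw [div_mul_cancel₀ _ (ne_of_gt hAM)] at h
        linarith
      have hsmall : 2 * A * dist (f p) (f q) ≤ bdryDistWrt (distFun Ω') (f p) := by
        have h1 : dist (f p) (f q) ≤
            L * (dist p q / bdryDistWrt (distFun Ω) p) * bdryDistWrt (distFun Ω') (f p) :=
          (div_le_iff₀ hbfp).1 hdistq
        have h2 : L * (dist p q / bdryDistWrt (distFun Ω) p) ≤ M * (1 / (2 * A * M)) := by
          have h3 : dist p q / bdryDistWrt (distFun Ω) p ≤ 1 / (2 * A * M) :=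
            le_trans hdd hδoverm
          have h4 : 0 ≤ dist p q / bdryDistWrt (distFun Ω) p :=
            div_nonneg dist_nonneg (le_of_lt hbppos)
          calc L * (dist p q / bdryDistWrt (distFun Ω) p)
              ≤ M * (dist p q / bdryDistWrt (distFun Ω) p) :=
                mul_le_mul_of_nonneg_right hLM h4
            _ ≤ M * (1 / (2 * A * M)) := mul_le_mul_of_nonneg_left h3 (by linarith)
        have h5 : M * (1 / (2 * A * M)) = 1 / (2 * A) := by
          field_simp
        have h6 : dist (f p) (f q) ≤ 1 / (2 * A) * bdryDistWrt (distFun Ω') (f p) := by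
          rw [← h5]; exact le_trans h1 (mul_le_mul_of_nonneg_right h2 (le_of_lt hbfp))
        rw [div_mul_eq_mul_div, le_div_iff₀ (by nlinarith : (0:ℝ) < 2 * A)] at h6
        nlinarith
      obtain ⟨li, hadm, hli⟩ := uniform_piece hA hΩ' (f p) (f q) hsmall
      refine ⟨li, fun _ => ⟨?_, ?_⟩⟩
      · show Adm _ (f (γ ((i:ℝ) * δ))) (f (γ (((i+1:ℕ)) * δ))) li
        exact hadm
      · -- bound li by the integral over the subinterval
        have hle : ((i:ℝ)) * δ ≤ ((i+1:ℕ) : ℝ) * δ := by rw [hcast]; nlinarith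
        have hsub : Icc ((i:ℝ) * δ) (((i+1:ℕ):ℝ) * δ) ⊆ Icc (0:ℝ) T :=
          Icc_subset_Icc hip.1 hiq.2
        have hbub : ∀ s ∈ Icc ((i:ℝ) * δ) (((i+1:ℕ):ℝ) * δ),
            (2 * bdryDistWrt (distFun Ω) p)⁻¹ ≤ (bdryDistWrt (distFun Ω) (γ s))⁻¹ := by
          intro s hs
          have h5 : dist (γ s) p ≤ δ := by
            have h := hlip s (hsub hs) _ hip
            calc dist (γ s) p ≤ |s - (i:ℝ) * δ| := h
              _ ≤ δ := by
                  rw [abs_of_nonneg (by linarith [hs.1])]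
                  have := hs.2
                  rw [hcast] at this
                  nlinarith
          have h7 := bdry_le_add hinc (γ s) p
          have h6 : bdryDistWrt (distFun Ω) (γ s) ≤ 2 * bdryDistWrt (distFun Ω) p := by
            nlinarith [hδlem]
          exact inv_anti₀ (hbpos _) h6
        have hγρint : IntervalIntegrable (fun s => (bdryDistWrt (distFun Ω) (γ s))⁻¹)
            MeasureTheory.volume ((i:ℝ) * δ) (((i+1:ℕ):ℝ) * δ) := by
          apply ContinuousOn.intervalIntegrable
          rw [uIcc_of_le hle]
          exact ContinuousOn.inv₀ (hbγcont.mono hsub) fun s hs => ne_of_gt (hbpos _)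
        have hintlb : δ * (2 * bdryDistWrt (distFun Ω) p)⁻¹ ≤
            ∫ s in ((i:ℝ) * δ)..(((i+1:ℕ):ℝ) * δ), (bdryDistWrt (distFun Ω) (γ s))⁻¹ := by
          have h := intervalIntegral.integral_mono_on hle intervalIntegrable_const hγρint hbub
          rw [intervalIntegral.integral_const, smul_eq_mul] at h
          have harith : ((i+1:ℕ):ℝ) * δ - (i:ℝ) * δ = δ := by rw [hcast]; ring
          rwa [harith] at h
        have hfinal : li ≤ 4 * A * L * (δ * (2 * bdryDistWrt (distFun Ω) p)⁻¹) := by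
          have e1 : 2 * A * dist (f p) (f q) / bdryDistWrt (distFun Ω') (f p) =
              2 * A * (dist (f p) (f q) / bdryDistWrt (distFun Ω') (f p)) := by ring
          have e2 : 2 * A * (dist (f p) (f q) / bdryDistWrt (distFun Ω') (f p)) ≤
              2 * A * (L * (dist p q / bdryDistWrt (distFun Ω) p)) := by
            apply mul_le_mul_of_nonneg_left hdistq (by nlinarith)
          have e3 : L * (dist p q / bdryDistWrt (distFun Ω) p) ≤ L * (δ / bdryDistWrt (distFun Ω) p) := by
            apply mul_le_mul_of_nonneg_left _ hL
            exact div_le_div₀ hδ0 hdpq hbppos le_rfl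
          have e4 : 2 * A * (L * (δ / bdryDistWrt (distFun Ω) p)) =
              4 * A * L * (δ * (2 * bdryDistWrt (distFun Ω) p)⁻¹) := by
            field_simp
            ring
          calc li ≤ 2 * A * dist (f p) (f q) / bdryDistWrt (distFun Ω') (f p) := hli
            _ = 2 * A * (dist (f p) (f q) / bdryDistWrt (distFun Ω') (f p)) := e1
            _ ≤ 2 * A * (L * (dist p q / bdryDistWrt (distFun Ω) p)) := e2
            _ ≤ 2 * A * (L * (δ / bdryDistWrt (distFun Ω) p)) := by nlinarith [e3]
            _ = 4 * A * L * (δ * (2 * bdryDistWrt (distFun Ω) p)⁻¹) := e4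
        refine le_trans hfinal ?_
        exact mul_le_mul_of_nonneg_left hintlb (by nlinarith)
    choose lfun hstep using step
    have hchain := Adm.chain g lfun n (fun i hi => (hstep i hi).1)
    have hg0 : g 0 = f x := by
      show f (γ (((0:ℕ) : ℝ) * δ)) = f x
      norm_num [hγ0]
    have hgn : g n = f y := by
      show f (γ (((n:ℕ) : ℝ) * δ)) = f y
      rw [hnδ, hγT]
    rw [hg0, hgn] at hchain
    have hle1 : quasiHypWrt (distFun Ω') (f x) (f y) ≤ ∑ i ∈ Finset.range n, lfun i :=
      confDist_le_of_adm hρ'nonneg hchain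
    have hpieceint : ∀ k : ℕ, k < n →
        IntervalIntegrable (fun s => (bdryDistWrt (distFun Ω) (γ s))⁻¹)
          MeasureTheory.volume ((k:ℝ) * δ) (((k+1:ℕ):ℝ) * δ) := by
      intro k hk
      apply ContinuousOn.intervalIntegrable
      have hle : ((k:ℝ)) * δ ≤ ((k+1:ℕ) : ℝ) * δ :=
        mul_le_mul_of_nonneg_right (by exact_mod_cast Nat.le_succ k) hδ0
      rw [uIcc_of_le hle]
      refine ContinuousOn.inv₀ (hbγcont.mono (Icc_subset_Icc (hgrid k (le_of_lt hk)).1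
        (hgrid (k+1) hk).2)) fun s hs => ne_of_gt (hbpos _)
    have hsplit : ∑ i ∈ Finset.range n,
        (∫ s in ((i:ℝ) * δ)..(((i+1:ℕ):ℝ) * δ), (bdryDistWrt (distFun Ω) (γ s))⁻¹) =
        ∫ s in (0:ℝ)..T, (bdryDistWrt (distFun Ω) (γ s))⁻¹ := by
      have h := intervalIntegral.sum_integral_adjacent_intervals
        (a := fun i : ℕ => (i : ℝ) * δ) (n := n) hpieceint
      simp only [Nat.cast_zero, zero_mul] at h
      rw [hnδ] at h
      exact h
    have hl0 : 0 ≤ l := by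
      rw [hldef]
      exact intervalIntegral.integral_nonneg hT0 fun s _ => inv_nonneg.2 (le_of_lt (hbpos _))
    have hsum : ∑ i ∈ Finset.range n, lfun i ≤ 4 * A * L * l := by
      calc ∑ i ∈ Finset.range n, lfun i
          ≤ ∑ i ∈ Finset.range n, 4 * A * L *
            (∫ s in ((i:ℝ) * δ)..(((i+1:ℕ):ℝ) * δ), (bdryDistWrt (distFun Ω) (γ s))⁻¹) :=
            Finset.sum_le_sum fun i hi => (hstep i (Finset.mem_range.1 hi)).2
        _ = 4 * A * L * ∑ i ∈ Finset.range n,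
            (∫ s in ((i:ℝ) * δ)..(((i+1:ℕ):ℝ) * δ), (bdryDistWrt (distFun Ω) (γ s))⁻¹) := by
            rw [Finset.mul_sum]
        _ = 4 * A * L * ∫ s in (0:ℝ)..T, (bdryDistWrt (distFun Ω) (γ s))⁻¹ := by rw [hsplit]
        _ = 4 * A * L * l := by rw [← hldef]
    have hAA : A ≤ A ^ 2 := by nlinarith
    have hcl : 4 * A * L * l ≤ c * l := by
      rw [hc]
      nlinarith [mul_le_mul_of_nonneg_right hAA (mul_nonneg hL hl0)]
    linarith [hle1, hsum, hcl]
  -- conclude by taking the infimum over `S`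
  rw [hqh]
  refine le_of_forall_pos_le_add fun ε hε => ?_
  have hcp : (0:ℝ) < c + 1 := by linarith
  obtain ⟨l, hlS, hllt⟩ :=
    exists_lt_of_csInf_lt hSne (lt_add_of_pos_right (sInf S) (div_pos hε hcp))
  have h1 := key l hlS
  have h2 : c * l ≤ c * sInf S + c * (ε / (c + 1)) := by nlinarith
  have h3 : c * (ε / (c + 1)) ≤ ε := by
    rw [mul_div_assoc']
    rw [div_le_iff₀ hcp]
    nlinarith
  linarith


end Paper

end
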